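/- For every integer C ≥ 1 and every integer D, there exists a finite simple graph G with Δ(G) ≥ D, mad(G) < (4C + 2)/(C + 1), and χ²(G) ≥ Δ(G) + C + 1. -/

import Mathlib

open SimpleGraph

def SimpleGraph.square {V : Type*} (G : SimpleGraph V) : SimpleGraph V where
  Adj u v := u ≠ v ∧ (G.Adj u v ∨ ∃ w, G.Adj u w ∧ G.Adj w v)
  symm := by
    constructor
    rintro u v ⟨h, hadj | ⟨w, h1, h2⟩⟩
    · exact ⟨Ne.symm h, Or.inl hadj.symm⟩
    · exact ⟨Ne.symm h, Or.inr ⟨w, h2.symm, h1.symm⟩⟩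
  loopless := ⟨fun v h => h.1 rfl⟩

/-- `G` is list `k`-colorable. -/
def SimpleGraph.IsListColorable {V : Type*} (G : SimpleGraph V) (k : ℕ) : Prop :=
  ∀ L : V → Finset ℕ, (∀ v, (L v).card = k) →
    ∃ c : V → ℕ, (∀ v, c v ∈ L v) ∧ ∀ u v, G.Adj u v → c u ≠ c v

noncomputable def deg {V : Type*} (G : SimpleGraph V) (v : V) : ℕ :=
  (G.neighborSet v).ncard

noncomputable def maxDeg {V : Type*} [Fintype V] (G : SimpleGraph V) : ℕ :=
  Finset.univ.sup (deg G)

noncomputable def chi2l {V : Type*} (G : SimpleGraph V) : ℕ :=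
  sInf {k | (G.square).IsListColorable k}

def madLT {V : Type*} (G : SimpleGraph V) (m : ℝ) : Prop :=
  ∀ H : G.Subgraph, H.verts.Nonempty →
    2 * (H.edgeSet.ncard : ℝ) < m * (H.verts.ncard : ℝ)

namespace S15
open Set
variable (C m : ℕ)
abbrev T := (Fin (C+1) ⊕ Unit) ⊕ (Fin m ⊕ Fin m × Fin C)
def vW (j : Fin (C+1)) : T C m := Sum.inl (Sum.inl j)
def vZ : T C m := Sum.inl (Sum.inr ())
def vU (i : Fin m) : T C m := Sum.inr (Sum.inl i)
def vX (i : Fin m) (j : Fin C) : T C m := Sum.inr (Sum.inr (i, j))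
def rel : T C m → T C m → Prop
  | Sum.inl (Sum.inl _), Sum.inl (Sum.inr _) => True
  | Sum.inr (Sum.inl _), Sum.inl (Sum.inl j) => j = 0
  | Sum.inr (Sum.inl i), Sum.inr (Sum.inr p) => p.1 = i
  | Sum.inr (Sum.inr p), Sum.inl (Sum.inl j) => j = Fin.succ p.2
  | _, _ => False
def Gt : SimpleGraph (T C m) where
  Adj a b := rel C m a b ∨ rel C m b a
  symm := by constructor; intro a b h; tauto
  loopless := by constructor; rintro ((j|u)|(i|p)) h <;> simp [rel] at h
lemma adj_WZ (j : Fin (C+1)) : (Gt C m).Adj (vW C m j) (vZ C m) := by left; trivial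
lemma adj_UW0 (i : Fin m) : (Gt C m).Adj (vU C m i) (vW C m 0) := by left; simp [rel, vU, vW]
lemma adj_UX (i : Fin m) (j : Fin C) : (Gt C m).Adj (vU C m i) (vX C m i j) := by left; simp [rel, vU, vX]
lemma adj_XW (i : Fin m) (j : Fin C) : (Gt C m).Adj (vX C m i j) (vW C m (Fin.succ j)) := by left; simp [rel, vX, vW]

lemma adj_cases {a b : T C m} (h : (Gt C m).Adj a b) :
    (∃ j, (a = vZ C m ∧ b = vW C m j) ∨ (b = vZ C m ∧ a = vW C m j)) ∨
    (∃ i, (a = vU C m i ∧ b = vW C m 0) ∨ (b = vU C m i ∧ a = vW C m 0)) ∨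
    (∃ i j, (a = vU C m i ∧ b = vX C m i j) ∨ (b = vU C m i ∧ a = vX C m i j)) ∨
    (∃ i j, (a = vX C m i j ∧ b = vW C m (Fin.succ j)) ∨ (b = vX C m i j ∧ a = vW C m (Fin.succ j))) := by
  obtain ((j|u)|(i|⟨p1,p2⟩)) := a <;> obtain ((j'|u')|(i'|⟨q1,q2⟩)) := b <;>
    simp_all [Gt, rel, vW, vZ, vU, vX]

lemma nbhd_card_le (hm : C + 1 ≤ m) (a : T C m) :
    ((Gt C m).neighborSet a).ncard ≤ m + 1 := by
  classical
  obtain ((j|u)|(i|⟨p1,p2⟩)) := a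
  · have hinj : Set.InjOn (fun t : T C m => match t with
        | Sum.inr (Sum.inl i) => some i
        | Sum.inr (Sum.inr p) => some p.1
        | _ => (none : Option (Fin m)))
        ((Gt C m).neighborSet (vW C m j)) := by
      intro t₁ h₁ t₂ h₂ hf
      rcases adj_cases C m h₁ with ⟨j₁, h|h⟩ | ⟨i₁, h|h⟩ | ⟨i₁, j₁, h|h⟩ | ⟨i₁, j₁, h|h⟩ <;>
      rcases adj_cases C m h₂ with ⟨j₂, h'|h'⟩ | ⟨i₂, h'|h'⟩ | ⟨i₂, j₂, h'|h'⟩ | ⟨i₂, j₂, h'|h'⟩ <;>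
        simp_all [vW, vZ, vU, vX, eq_comm (a := (0 : Fin (C+1)))]
    calc ((Gt C m).neighborSet (vW C m j)).ncard ≤ (univ : Set (Option (Fin m))).ncard :=
          Set.ncard_le_ncard_of_injOn _ (fun a _ => mem_univ _) hinj (toFinite _)
      _ = m + 1 := by simp [Set.ncard_univ]
  · have hinj : Set.InjOn (fun t : T C m => match t with
        | Sum.inl (Sum.inl j) => j
        | _ => (0 : Fin (C+1)))
        ((Gt C m).neighborSet (vZ C m)) := by
      intro t₁ h₁ t₂ h₂ hf
      rcases adj_cases C m h₁ with ⟨j₁, h|h⟩ | ⟨i₁, h|h⟩ | ⟨i₁, j₁, h|h⟩ | ⟨i₁, j₁, h|h⟩ <;>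
      rcases adj_cases C m h₂ with ⟨j₂, h'|h'⟩ | ⟨i₂, h'|h'⟩ | ⟨i₂, j₂, h'|h'⟩ | ⟨i₂, j₂, h'|h'⟩ <;>
        simp_all [vW, vZ, vU, vX]
    calc ((Gt C m).neighborSet (vZ C m)).ncard ≤ (univ : Set (Fin (C+1))).ncard :=
          Set.ncard_le_ncard_of_injOn _ (fun a _ => mem_univ _) hinj (toFinite _)
      _ ≤ m + 1 := by simp [Set.ncard_univ]; omega
  · have hinj : Set.InjOn (fun t : T C m => match t with
        | Sum.inr (Sum.inr p) => some p.2
        | _ => (none : Option (Fin C)))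
        ((Gt C m).neighborSet (vU C m i)) := by
      intro t₁ h₁ t₂ h₂ hf
      rcases adj_cases C m h₁ with ⟨j₁, h|h⟩ | ⟨i₁, h|h⟩ | ⟨i₁, j₁, h|h⟩ | ⟨i₁, j₁, h|h⟩ <;>
      rcases adj_cases C m h₂ with ⟨j₂, h'|h'⟩ | ⟨i₂, h'|h'⟩ | ⟨i₂, j₂, h'|h'⟩ | ⟨i₂, j₂, h'|h'⟩ <;>
        simp_all [vW, vZ, vU, vX, Fin.ext_iff]
    calc ((Gt C m).neighborSet (vU C m i)).ncard ≤ (univ : Set (Option (Fin C))).ncard :=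
          Set.ncard_le_ncard_of_injOn _ (fun a _ => mem_univ _) hinj (toFinite _)
      _ ≤ m + 1 := by simp [Set.ncard_univ]; omega
  · have hinj : Set.InjOn (fun t : T C m => match t with
        | Sum.inr (Sum.inl _) => true
        | _ => false)
        ((Gt C m).neighborSet (vX C m p1 p2)) := by
      intro t₁ h₁ t₂ h₂ hf
      rcases adj_cases C m h₁ with ⟨j₁, h|h⟩ | ⟨i₁, h|h⟩ | ⟨i₁, j₁, h|h⟩ | ⟨i₁, j₁, h|h⟩ <;>
      rcases adj_cases C m h₂ with ⟨j₂, h'|h'⟩ | ⟨i₂, h'|h'⟩ | ⟨i₂, j₂, h'|h'⟩ | ⟨i₂, j₂, h'|h'⟩ <;>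
        simp_all [vW, vZ, vU, vX, Fin.ext_iff]
    calc ((Gt C m).neighborSet (vX C m p1 p2)).ncard ≤ (univ : Set Bool).ncard :=
          Set.ncard_le_ncard_of_injOn _ (fun a _ => mem_univ _) hinj (toFinite _)
      _ ≤ m + 1 := by simp [Set.ncard_univ]; omega

lemma nbhd_W0_lower : m ≤ ((Gt C m).neighborSet (vW C m 0)).ncard := by
  have hsub : Set.range (vU C m) ⊆ (Gt C m).neighborSet (vW C m 0) := by
    rintro t ⟨i, rfl⟩
    exact ((Gt C m).adj_symm (adj_UW0 C m i))
  have hinj : Function.Injective (vU C m) := by intro i i' h; simpa [vU] using h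
  calc m = (Set.range (vU C m)).ncard := by
        rw [← Set.image_univ, Set.ncard_image_of_injective _ hinj, Set.ncard_univ]; simp
    _ ≤ _ := Set.ncard_le_ncard hsub (toFinite _)

def emb : (Fin (C+1) ⊕ Unit) ⊕ Fin m → T C m := Sum.map id Sum.inl

lemma emb_inj : Function.Injective (emb C m) :=
  Sum.map_injective.2 ⟨Function.injective_id, Sum.inl_injective⟩

lemma sq_adj (s₁ s₂ : (Fin (C+1) ⊕ Unit) ⊕ Fin m) (h : emb C m s₁ ≠ emb C m s₂) :
    (Gt C m).square.Adj (emb C m s₁) (emb C m s₂) := by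
  refine ⟨h, ?_⟩
  obtain (j|u) | i := s₁ <;> obtain (j'|u') | i' := s₂
  · exact Or.inr ⟨vZ C m, adj_WZ C m j, ((Gt C m).adj_symm (adj_WZ C m j'))⟩
  · exact Or.inl (adj_WZ C m j)
  · refine Fin.cases ?_ ?_ j
    · exact Or.inl ((Gt C m).adj_symm (adj_UW0 C m i'))
    · intro j₀
      exact Or.inr ⟨vX C m i' j₀, (Gt C m).adj_symm (adj_XW C m i' j₀),
        (Gt C m).adj_symm (adj_UX C m i' j₀)⟩
  · exact Or.inl ((Gt C m).adj_symm (adj_WZ C m j'))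
  · exact absurd rfl h
  · exact Or.inr ⟨vW C m 0, (Gt C m).adj_symm (adj_WZ C m 0), (Gt C m).adj_symm (adj_UW0 C m i')⟩
  · refine Fin.cases ?_ ?_ j'
    · exact Or.inl (adj_UW0 C m i)
    · intro j₀
      exact Or.inr ⟨vX C m i j₀, adj_UX C m i j₀, adj_XW C m i j₀⟩
  · exact Or.inr ⟨vW C m 0, adj_UW0 C m i, adj_WZ C m 0⟩
  · exact Or.inr ⟨vW C m 0, adj_UW0 C m i, (Gt C m).adj_symm (adj_UW0 C m i')⟩

variable {n : ℕ} (φ : T C m ≃ Fin n)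

noncomputable def Gn : SimpleGraph (Fin n) := SimpleGraph.comap (⇑φ.symm) (Gt C m)

lemma preim_ncard (N : Set (T C m)) : ((⇑φ.symm) ⁻¹' N).ncard = N.ncard := by
  conv_rhs => rw [← Set.image_preimage_eq N φ.symm.surjective]
  rw [Set.ncard_image_of_injective _ φ.symm.injective]

lemma deg_Gn (x : Fin n) : deg (Gn C m φ) x = deg (Gt C m) (φ.symm x) := by
  have h : (Gn C m φ).neighborSet x = (⇑φ.symm) ⁻¹' ((Gt C m).neighborSet (φ.symm x)) := rfl
  rw [deg, h, preim_ncard, deg]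

lemma maxDeg_Gn_le (hm : C + 1 ≤ m) : maxDeg (Gn C m φ) ≤ m + 1 :=
  Finset.sup_le fun x _ => by rw [deg_Gn]; exact nbhd_card_le C m hm _

lemma maxDeg_Gn_ge : m ≤ maxDeg (Gn C m φ) := by
  refine le_trans ?_ (Finset.le_sup (Finset.mem_univ (φ (vW C m 0))))
  rw [deg_Gn]
  simpa [deg] using nbhd_W0_lower C m

lemma sq_transfer {a b : T C m} (h : (Gt C m).square.Adj a b) :
    (Gn C m φ).square.Adj (φ a) (φ b) := by
  refine ⟨φ.injective.ne h.1, ?_⟩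
  rcases h.2 with h' | ⟨t, h1, h2⟩
  · left; show (Gt C m).Adj (φ.symm (φ a)) (φ.symm (φ b)); simpa using h'
  · right
    exact ⟨φ t, by show (Gt C m).Adj (φ.symm (φ a)) (φ.symm (φ t)); simpa using h1,
      by show (Gt C m).Adj (φ.symm (φ t)) (φ.symm (φ b)); simpa using h2⟩

lemma chrom_lower :
    ((m + C + 2 : ℕ) : ℕ∞) ≤ ((Gn C m φ).square).chromaticNumber := by
  classical
  have hinj : Function.Injective (fun s => φ (emb C m s)) :=
    φ.injective.comp (emb_inj C m)
  set SF : Finset (Fin n) := Finset.univ.image (fun s => φ (emb C m s)) with hSF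
  have hclique : ((Gn C m φ).square).IsClique ↑SF := by
    intro x hx y hy hne
    simp only [hSF, Finset.coe_image, Finset.coe_univ, Set.image_univ, Set.mem_range] at hx hy
    obtain ⟨s₁, rfl⟩ := hx
    obtain ⟨s₂, rfl⟩ := hy
    exact sq_transfer C m φ (sq_adj C m s₁ s₂ (fun h => hne (congrArg φ h)))
  have hcard : SF.card = m + C + 2 := by
    rw [hSF, Finset.card_image_of_injective _ hinj]
    simp [Fintype.card_sum]
    ring
  calc ((m + C + 2 : ℕ) : ℕ∞) = (SF.card : ℕ∞) := by rw [hcard]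
    _ ≤ _ := hclique.card_le_chromaticNumber

def SW (H : (Gn C m φ).Subgraph) : Set (Fin n) := {x | x ∈ H.verts ∧ ∃ j, φ.symm x = vW C m j}
def SZ (H : (Gn C m φ).Subgraph) : Set (Fin n) := {x | x ∈ H.verts ∧ φ.symm x = vZ C m}
def SU (H : (Gn C m φ).Subgraph) : Set (Fin n) := {x | x ∈ H.verts ∧ ∃ i, φ.symm x = vU C m i}
def SX (H : (Gn C m φ).Subgraph) : Set (Fin n) :=
  {x | x ∈ H.verts ∧ ∃ p : Fin m × Fin C, φ.symm x = vX C m p.1 p.2}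

lemma vert_count (H : (Gn C m φ).Subgraph) :
    H.verts.ncard = (SW C m φ H).ncard + ((SZ C m φ H).ncard
      + ((SU C m φ H).ncard + (SX C m φ H).ncard)) := by
  have hvcover : H.verts = SW C m φ H ∪ (SZ C m φ H ∪ (SU C m φ H ∪ SX C m φ H)) := by
    ext x
    constructor
    · intro hx
      rcases hs : φ.symm x with (j|u)|(i|⟨p1,p2⟩)
      · exact Or.inl ⟨hx, j, by rw [hs]; rfl⟩
      · exact Or.inr (Or.inl ⟨hx, by rw [hs]; rfl⟩)
      · exact Or.inr (Or.inr (Or.inl ⟨hx, i, by rw [hs]; rfl⟩))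
      · exact Or.inr (Or.inr (Or.inr ⟨hx, (p1,p2), by rw [hs]; rfl⟩))
    · rintro (h|(h|(h|h))) <;> exact h.1
  have hd1 : Disjoint (SZ C m φ H) (SU C m φ H ∪ SX C m φ H) := by
    rw [Set.disjoint_left]
    rintro x ⟨hx, hz⟩ h
    rcases h with ⟨-, i, hu⟩ | ⟨-, p, hxx⟩
    · rw [hz] at hu; simp [vZ, vU] at hu
    · rw [hz] at hxx; simp [vZ, vX] at hxx
  have hd2 : Disjoint (SU C m φ H) (SX C m φ H) := by
    rw [Set.disjoint_left]
    rintro x ⟨hx, i, hu⟩ ⟨-, p, hxx⟩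
    rw [hu] at hxx; simp [vU, vX] at hxx
  have hd0 : Disjoint (SW C m φ H) (SZ C m φ H ∪ (SU C m φ H ∪ SX C m φ H)) := by
    rw [Set.disjoint_left]
    rintro x ⟨hx, j, hw⟩ h
    rcases h with ⟨-, hz⟩ | (⟨-, i, hu⟩ | ⟨-, p, hxx⟩)
    · rw [hw] at hz; simp [vW, vZ] at hz
    · rw [hw] at hu; simp [vW, vU] at hu
    · rw [hw] at hxx; simp [vW, vX] at hxx
  rw [hvcover, Set.ncard_union_eq hd0 (toFinite _) (toFinite _),
    Set.ncard_union_eq hd1 (toFinite _) (toFinite _),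
    Set.ncard_union_eq hd2 (toFinite _) (toFinite _)]


def f1 (j : Fin (C+1)) : Sym2 (Fin n) := s(φ (vZ C m), φ (vW C m j))
def f2 (i : Fin m) : Sym2 (Fin n) := s(φ (vU C m i), φ (vW C m 0))
def f3 (p : Fin m × Fin C) : Sym2 (Fin n) := s(φ (vU C m p.1), φ (vX C m p.1 p.2))
def f4 (p : Fin m × Fin C) : Sym2 (Fin n) := s(φ (vX C m p.1 p.2), φ (vW C m (Fin.succ p.2)))

def J1 (H : (Gn C m φ).Subgraph) : Set (Fin (C+1)) := {j | f1 C m φ j ∈ H.edgeSet}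
def J2 (H : (Gn C m φ).Subgraph) : Set (Fin m) := {i | f2 C m φ i ∈ H.edgeSet}
def J3 (H : (Gn C m φ).Subgraph) : Set (Fin m × Fin C) := {p | f3 C m φ p ∈ H.edgeSet}
def J4 (H : (Gn C m φ).Subgraph) : Set (Fin m × Fin C) := {p | f4 C m φ p ∈ H.edgeSet}

lemma edge_cover (H : (Gn C m φ).Subgraph) :
    H.edgeSet ⊆ (f1 C m φ '' J1 C m φ H) ∪ ((f2 C m φ '' J2 C m φ H) ∪
      ((f3 C m φ '' J3 C m φ H) ∪ (f4 C m φ '' J4 C m φ H))) := by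
  intro e he
  induction e using Sym2.ind with
  | _ x y =>
    have hadj : H.Adj x y := (Subgraph.mem_edgeSet).1 he
    have hGt : (Gt C m).Adj (φ.symm x) (φ.symm y) := H.adj_sub hadj
    have hx : φ (φ.symm x) = x := φ.apply_symm_apply x
    have hy : φ (φ.symm y) = y := φ.apply_symm_apply y
    rcases adj_cases C m hGt with ⟨j, ⟨h1, h2⟩|⟨h1, h2⟩⟩ | ⟨i, ⟨h1, h2⟩|⟨h1, h2⟩⟩ |
      ⟨i, j, ⟨h1, h2⟩|⟨h1, h2⟩⟩ | ⟨i, j, ⟨h1, h2⟩|⟨h1, h2⟩⟩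
    · have heq : f1 C m φ j = s(x, y) := by
        rw [f1, ← hx, ← hy, h1, h2]
      exact Or.inl ⟨j, by rw [J1, Set.mem_setOf_eq, heq]; exact he, heq⟩
    · have heq : f1 C m φ j = s(x, y) := by
        rw [f1, ← hx, ← hy, h1, h2, Sym2.eq_swap]
      exact Or.inl ⟨j, by rw [J1, Set.mem_setOf_eq, heq]; exact he, heq⟩
    · have heq : f2 C m φ i = s(x, y) := by
        rw [f2, ← hx, ← hy, h1, h2]
      exact Or.inr (Or.inl ⟨i, by rw [J2, Set.mem_setOf_eq, heq]; exact he, heq⟩)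
    · have heq : f2 C m φ i = s(x, y) := by
        rw [f2, ← hx, ← hy, h1, h2, Sym2.eq_swap]
      exact Or.inr (Or.inl ⟨i, by rw [J2, Set.mem_setOf_eq, heq]; exact he, heq⟩)
    · have heq : f3 C m φ (i, j) = s(x, y) := by
        rw [f3, ← hx, ← hy, h1, h2]
      exact Or.inr (Or.inr (Or.inl ⟨(i, j), by rw [J3, Set.mem_setOf_eq, heq]; exact he, heq⟩))
    · have heq : f3 C m φ (i, j) = s(x, y) := by
        rw [f3, ← hx, ← hy, h1, h2, Sym2.eq_swap]
      exact Or.inr (Or.inr (Or.inl ⟨(i, j), by rw [J3, Set.mem_setOf_eq, heq]; exact he, heq⟩))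
    · have heq : f4 C m φ (i, j) = s(x, y) := by
        rw [f4, ← hx, ← hy, h1, h2]
      exact Or.inr (Or.inr (Or.inr ⟨(i, j), by rw [J4, Set.mem_setOf_eq, heq]; exact he, heq⟩))
    · have heq : f4 C m φ (i, j) = s(x, y) := by
        rw [f4, ← hx, ← hy, h1, h2, Sym2.eq_swap]
      exact Or.inr (Or.inr (Or.inr ⟨(i, j), by rw [J4, Set.mem_setOf_eq, heq]; exact he, heq⟩))

lemma edge_count (H : (Gn C m φ).Subgraph) :
    H.edgeSet.ncard ≤ (J1 C m φ H).ncard + ((J2 C m φ H).ncard +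
      ((J3 C m φ H).ncard + (J4 C m φ H).ncard)) := by
  calc H.edgeSet.ncard ≤ _ := Set.ncard_le_ncard (edge_cover C m φ H) (toFinite _)
    _ ≤ _ := le_trans (Set.ncard_union_le _ _) (by
        gcongr
        · exact Set.ncard_image_le (toFinite _)
        · exact le_trans (Set.ncard_union_le _ _) (by
            gcongr
            · exact Set.ncard_image_le (toFinite _)
            · exact le_trans (Set.ncard_union_le _ _) (by
                gcongr <;> exact Set.ncard_image_le (toFinite _))))

lemma J1_le (H : (Gn C m φ).Subgraph) : (J1 C m φ H).ncard ≤ (SW C m φ H).ncard := by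
  refine Set.ncard_le_ncard_of_injOn (fun j => φ (vW C m j)) ?_ ?_ (toFinite _)
  · intro j hj
    have hadj : H.Adj (φ (vZ C m)) (φ (vW C m j)) := (Subgraph.mem_edgeSet).1 hj
    exact ⟨H.edge_vert hadj.symm, j, by simp⟩
  · intro a _ b _ h
    have := φ.injective h
    simpa [vW] using this

lemma J2_le (H : (Gn C m φ).Subgraph) : (J2 C m φ H).ncard ≤ (SU C m φ H).ncard := by
  refine Set.ncard_le_ncard_of_injOn (fun i => φ (vU C m i)) ?_ ?_ (toFinite _)
  · intro i hi
    have hadj : H.Adj (φ (vU C m i)) (φ (vW C m 0)) := (Subgraph.mem_edgeSet).1 hi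
    exact ⟨H.edge_vert hadj, i, by simp⟩
  · intro a _ b _ h
    have := φ.injective h
    simpa [vU] using this

lemma J3_le_SX (H : (Gn C m φ).Subgraph) : (J3 C m φ H).ncard ≤ (SX C m φ H).ncard := by
  refine Set.ncard_le_ncard_of_injOn (fun p => φ (vX C m p.1 p.2)) ?_ ?_ (toFinite _)
  · intro p hp
    have hadj : H.Adj (φ (vU C m p.1)) (φ (vX C m p.1 p.2)) := (Subgraph.mem_edgeSet).1 hp
    exact ⟨H.edge_vert hadj.symm, p, by simp⟩
  · intro a _ b _ h
    have := φ.injective h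
    simpa [vX, Prod.ext_iff] using this

lemma J4_le_SX (H : (Gn C m φ).Subgraph) : (J4 C m φ H).ncard ≤ (SX C m φ H).ncard := by
  refine Set.ncard_le_ncard_of_injOn (fun p => φ (vX C m p.1 p.2)) ?_ ?_ (toFinite _)
  · intro p hp
    have hadj : H.Adj (φ (vX C m p.1 p.2)) (φ (vW C m (Fin.succ p.2))) :=
      (Subgraph.mem_edgeSet).1 hp
    exact ⟨H.edge_vert hadj, p, by simp⟩
  · intro a _ b _ h
    have := φ.injective h
    simpa [vX, Prod.ext_iff] using this

lemma J3_le_CSU (H : (Gn C m φ).Subgraph) : (J3 C m φ H).ncard ≤ C * (SU C m φ H).ncard := by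
  have hprod : ((SU C m φ H) ×ˢ (Set.univ : Set (Fin C))).ncard = (SU C m φ H).ncard * C := by
    rw [← Nat.card_coe_set_eq, Nat.card_congr (Equiv.Set.prod _ _), Nat.card_prod,
      Nat.card_coe_set_eq, Nat.card_coe_set_eq, Set.ncard_univ, Nat.card_eq_fintype_card,
      Fintype.card_fin]
  have h1 : (J3 C m φ H).ncard ≤ ((SU C m φ H) ×ˢ (Set.univ : Set (Fin C))).ncard := by
    refine Set.ncard_le_ncard_of_injOn (fun p => (φ (vU C m p.1), p.2)) ?_ ?_ (toFinite _)
    · intro p hp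
      have hadj : H.Adj (φ (vU C m p.1)) (φ (vX C m p.1 p.2)) := (Subgraph.mem_edgeSet).1 hp
      exact ⟨⟨H.edge_vert hadj, p.1, by simp⟩, Set.mem_univ _⟩
    · intro a _ b _ h
      rw [Prod.ext_iff] at h
      obtain ⟨h1, h2⟩ := h
      have := φ.injective h1
      simp only [vU, Sum.inl.injEq, Sum.inr.injEq] at this
      exact Prod.ext this h2
  exact le_trans h1 (by rw [hprod, Nat.mul_comm])

lemma J2_empty (H : (Gn C m φ).Subgraph) (h : (SW C m φ H).ncard = 0) :
    (J2 C m φ H).ncard = 0 := by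
  rw [Set.ncard_eq_zero (toFinite _)]
  rw [Set.eq_empty_iff_forall_notMem]
  intro i hi
  have hadj : H.Adj (φ (vU C m i)) (φ (vW C m 0)) := (Subgraph.mem_edgeSet).1 hi
  have hmem : φ (vW C m 0) ∈ SW C m φ H := ⟨H.edge_vert hadj.symm, 0, by simp⟩
  have := (Set.ncard_pos (toFinite _)).2 ⟨_, hmem⟩
  omega

lemma J4_empty (H : (Gn C m φ).Subgraph) (h : (SW C m φ H).ncard = 0) :
    (J4 C m φ H).ncard = 0 := by
  rw [Set.ncard_eq_zero (toFinite _)]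
  rw [Set.eq_empty_iff_forall_notMem]
  intro p hp
  have hadj : H.Adj (φ (vX C m p.1 p.2)) (φ (vW C m (Fin.succ p.2))) :=
    (Subgraph.mem_edgeSet).1 hp
  have hmem : φ (vW C m (Fin.succ p.2)) ∈ SW C m φ H := ⟨H.edge_vert hadj.symm, Fin.succ p.2, by simp⟩
  have := (Set.ncard_pos (toFinite _)).2 ⟨_, hmem⟩
  omega

lemma mad_aux (hC : 1 ≤ C) (H : (Gn C m φ).Subgraph) (hne : H.verts.Nonempty) :
    (C+1) * H.edgeSet.ncard < (2*C+1) * H.verts.ncard := by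
  have hv := vert_count C m φ H
  have he := edge_count C m φ H
  have h1 := J1_le C m φ H
  have h2 := J2_le C m φ H
  have h3a := J3_le_SX C m φ H
  have h3b := J3_le_CSU C m φ H
  have h4 := J4_le_SX C m φ H
  have hvpos : 0 < H.verts.ncard := (Set.ncard_pos (toFinite _)).2 hne
  set e := H.edgeSet.ncard
  set sw := (SW C m φ H).ncard
  set sz := (SZ C m φ H).ncard
  set su := (SU C m φ H).ncard
  set sx := (SX C m φ H).ncard
  set j1 := (J1 C m φ H).ncard
  set j2 := (J2 C m φ H).ncard
  set j3 := (J3 C m φ H).ncard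
  set j4 := (J4 C m φ H).ncard
  by_cases hA : sw = 0 ∧ sz = 0
  · -- no W vertices, no Z vertex
    obtain ⟨hw0, hz0⟩ := hA
    have hj2 : j2 = 0 := J2_empty C m φ H hw0
    have hj4 : j4 = 0 := J4_empty C m φ H hw0
    have hee : e ≤ sx := by omega
    rcases Nat.eq_zero_or_pos e with he0 | hep
    · rw [he0, Nat.mul_zero]
      positivity
    · have hsx : 1 ≤ sx := le_trans hep hee
      calc (C+1) * e ≤ (C+1) * sx := Nat.mul_le_mul_left _ hee
        _ < (2*C+1) * sx := by
            have : C + 1 < 2*C + 1 := by omega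
            exact Nat.mul_lt_mul_of_lt_of_le this (le_refl _) (by omega)
        _ ≤ (2*C+1) * H.verts.ncard := Nat.mul_le_mul_left _ (by omega)
  · have hWZ : 1 ≤ sw ∨ 1 ≤ sz := by omega
    have hmid : (C+1) * j3 ≤ C*sx + C*su := by
      calc (C+1) * j3 = C*j3 + j3 := by ring
        _ ≤ C*sx + C*su := Nat.add_le_add (Nat.mul_le_mul_left _ h3a) h3b
    have hkey : (C+1) * e ≤ (C+1)*sw + ((C+1)*su + ((C*sx + C*su) + (C+1)*sx)) := by
      calc (C+1) * e ≤ (C+1) * (j1 + (j2 + (j3 + j4))) := Nat.mul_le_mul_left _ he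
        _ = (C+1)*j1 + ((C+1)*j2 + ((C+1)*j3 + (C+1)*j4)) := by ring
        _ ≤ (C+1)*sw + ((C+1)*su + ((C*sx + C*su) + (C+1)*sx)) :=
            Nat.add_le_add (Nat.mul_le_mul_left _ h1)
              (Nat.add_le_add (Nat.mul_le_mul_left _ h2)
                (Nat.add_le_add hmid (Nat.mul_le_mul_left _ h4)))
    rw [hv]
    rcases hWZ with hw | hz
    · nlinarith [hkey, hw, hC]
    · nlinarith [hkey, hz, hC]


end S15

theorem statement15 (C : ℕ) (hC : 1 ≤ C) (D : ℤ) :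
    ∃ (n : ℕ) (G : SimpleGraph (Fin n)),
      D ≤ (maxDeg G : ℤ) ∧
      madLT G (((4 * C + 2 : ℕ) : ℝ) / ((C + 1 : ℕ) : ℝ)) ∧
      (maxDeg G : ℕ∞) + C + 1 ≤ (G.square).chromaticNumber := by
  classical
  set m : ℕ := C + 1 + D.toNat with hm
  have hmge : C + 1 ≤ m := by omega
  set φ : S15.T C m ≃ Fin (Fintype.card (S15.T C m)) := Fintype.equivFin (S15.T C m) with hφ
  refine ⟨Fintype.card (S15.T C m), S15.Gn C m φ, ?_, ?_, ?_⟩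
  · have h := S15.maxDeg_Gn_ge C m φ
    omega
  · intro H hne
    have key := S15.mad_aux C m φ hC H hne
    have hpos : (0 : ℝ) < ((C + 1 : ℕ) : ℝ) := by positivity
    rw [div_mul_eq_mul_div, lt_div_iff₀ hpos]
    have key' : ((C:ℝ)+1) * (H.edgeSet.ncard : ℝ) < (2*(C:ℝ)+1) * (H.verts.ncard : ℝ) := by
      exact_mod_cast key
    push_cast
    nlinarith [key']
  · have hle := S15.maxDeg_Gn_le C m φ hmge
    calc (maxDeg (S15.Gn C m φ) : ℕ∞) + C + 1
        ≤ ((m + 1 : ℕ) : ℕ∞) + C + 1 := by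
          exact add_le_add_left (add_le_add_left (by exact_mod_cast hle) _) _
      _ = ((m + C + 2 : ℕ) : ℕ∞) := by push_cast; ring
      _ ≤ _ := S15.chrom_lower C m φ
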